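/- Let n ∈ ℕ (n ≥ 1) and let I be a proper open subinterval of ℝ. If f : I → ℝ is Jensen convex of order n, then f satisfies the n-convexity inequality at all rational nodes: [x_0, x_1, …, x_n, x_{n+1}; f] ≥ 0 for all pairwise distinct rational points x_0, x_1, …, x_n, x_{n+1} ∈ I ∩ ℚ. -/

import Mathlib

open Finset

/-- The difference operator `Δ_h`. -/
noncomputable def dOp (h : ℝ) (f : ℝ → ℝ) : ℝ → ℝ := fun x => f (x + h) - f x

/-- Iterated difference operator `Δ_{h_1} ⋯ Δ_{h_k}` for a list `[h_1, …, h_k]`. -/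
noncomputable def dList (l : List ℝ) (f : ℝ → ℝ) : ℝ → ℝ := l.foldr dOp f

/-- The divided difference `[x_0, …, x_m; f]`. -/
noncomputable def divDiff (m : ℕ) (x : Fin (m + 1) → ℝ) (f : ℝ → ℝ) : ℝ :=
  ∑ i, f (x i) / ∏ j ∈ Finset.univ.erase i, (x i - x j)

/-- `I` is a proper open subinterval of the real line. -/
def ProperOpenInterval (I : Set ℝ) : Prop :=
  IsOpen I ∧ I.OrdConnected ∧ I.Nonempty ∧ I ≠ Set.univ

/-- A real number which is rational. -/
def IsRatR (x : ℝ) : Prop := ∃ q : ℚ, (q : ℝ) = x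

/-- `f` is Wright convex of order `n` on `I`. -/
def WrightConvexOrder (n : ℕ) (I : Set ℝ) (f : ℝ → ℝ) : Prop :=
  ∀ l : List ℝ, l.length = n + 1 → (∀ h ∈ l, 0 < h) →
    ∀ x : ℝ, x ∈ I → x + l.sum ∈ I → 0 ≤ dList l f x

/-- `f` is Jensen convex of order `n` on `I`. -/
def JensenConvexOrder (n : ℕ) (I : Set ℝ) (f : ℝ → ℝ) : Prop :=
  ∀ h : ℝ, 0 < h → ∀ x : ℝ, x ∈ I → x + (n + 1) * h ∈ I → 0 ≤ (dOp h)^[n + 1] f x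

/-- `f` is convex of order `n` on `I`. -/
def ConvexOrder (n : ℕ) (I : Set ℝ) (f : ℝ → ℝ) : Prop :=
  ∀ x : Fin (n + 2) → ℝ, Function.Injective x → (∀ i, x i ∈ I) →
    0 ≤ divDiff (n + 1) x f

noncomputable def D (f : ℝ → ℝ) (s : Finset ℝ) : ℝ :=
  ∑ a ∈ s, f a / ∏ b ∈ s.erase a, (a - b)

lemma prodNe (s : Finset ℝ) (c : ℝ) : ∏ b ∈ s.erase c, (c - b) ≠ 0 :=
  Finset.prod_ne_zero_iff.2 fun b hb => sub_ne_zero.2 (Ne.symm (Finset.ne_of_mem_erase hb))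

lemma D_erase (f : ℝ → ℝ) (s : Finset ℝ) (a : ℝ) (ha : a ∈ s) :
    D f (s.erase a) = ∑ c ∈ s, f c * (c - a) / ∏ b ∈ s.erase c, (c - b) := by
  rw [D, ← Finset.add_sum_erase _ _ ha, sub_self, mul_zero, zero_div, zero_add]
  refine Finset.sum_congr rfl fun c hc => ?_
  have hca : c ≠ a := Finset.ne_of_mem_erase hc
  have hac : a ∈ s.erase c := Finset.mem_erase.2 ⟨hca.symm, ha⟩
  rw [Finset.erase_right_comm, ← Finset.mul_prod_erase (s.erase c) (fun b => c - b) hac,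
    mul_comm (f c) (c - a), mul_div_mul_left _ _ (sub_ne_zero.2 hca)]

lemma D_rec (f : ℝ → ℝ) (s : Finset ℝ) {a b : ℝ} (ha : a ∈ s) (hb : b ∈ s) :
    (b - a) * D f s = D f (s.erase a) - D f (s.erase b) := by
  rw [D_erase f s a ha, D_erase f s b hb, ← Finset.sum_sub_distrib, D, Finset.mul_sum]
  refine Finset.sum_congr rfl fun c hc => ?_
  have hP := prodNe s c
  field_simp
  ring

lemma D_insert (f : ℝ → ℝ) (s : Finset ℝ) {a b t : ℝ} (ha : a ∈ s) (hb : b ∈ s) (ht : t ∉ s)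
    (hta : t ≠ a) (htb : t ≠ b) :
    (b - a) * D f s =
      (t - a) * D f (insert t (s.erase b)) - (t - b) * D f (insert t (s.erase a)) := by
  have hta' : a ∈ insert t s := Finset.mem_insert_of_mem ha
  have htb' : b ∈ insert t s := Finset.mem_insert_of_mem hb
  have htt : t ∈ insert t s := Finset.mem_insert_self t s
  have h1 := D_rec f (insert t s) hta' htt
  have h2 := D_rec f (insert t s) htb' htt
  rw [Finset.erase_insert ht, Finset.erase_insert_of_ne hta] at h1
  rw [Finset.erase_insert ht, Finset.erase_insert_of_ne htb] at h2
  linear_combination (t - a) * h2 - (t - b) * h1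

lemma D_grid (f : ℝ → ℝ) (h : ℝ) (hh : 0 < h) :
    ∀ (m : ℕ) (x : ℝ),
      D f ((Finset.range (m + 1)).image (fun j : ℕ => x + j * h)) =
        (dOp h)^[m] f x / (m.factorial * h ^ m) := by
  intro m
  induction m with
  | zero => intro x; simp [D]
  | succ m ih =>
    intro x
    set g : ℕ → ℝ := fun j : ℕ => x + j * h with hg
    have hgm : StrictMono g := fun i j hij => by
      simp only [hg]
      have : (i : ℝ) < j := by exact_mod_cast hij
      nlinarith
    have h0 : g 0 ∈ (Finset.range (m + 2)).image g :=
      Finset.mem_image_of_mem g (by simp)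
    have h1 : g (m + 1) ∈ (Finset.range (m + 2)).image g :=
      Finset.mem_image_of_mem g (by simp)
    have hA : ((Finset.range (m + 2)).image g).erase (g 0) =
        (Finset.range (m + 1)).image (fun j : ℕ => (x + h) + j * h) := by
      ext y
      simp only [Finset.mem_erase, Finset.mem_image, Finset.mem_range]
      constructor
      · rintro ⟨hy0, j, hj, rfl⟩
        have hj0 : j ≠ 0 := fun hj0 => hy0 (by rw [hj0])
        obtain ⟨j', rfl⟩ := Nat.exists_eq_succ_of_ne_zero hj0
        exact ⟨j', by omega, by simp [hg]; push_cast; ring⟩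
      · rintro ⟨j, hj, rfl⟩
        refine ⟨?_, j + 1, by omega, by simp [hg]; push_cast; ring⟩
        have := hgm (Nat.succ_pos j)
        have he : (x + h) + j * h = g (j + 1) := by simp [hg]; push_cast; ring
        rw [he]
        exact ne_of_gt this
    have hB : ((Finset.range (m + 2)).image g).erase (g (m + 1)) =
        (Finset.range (m + 1)).image g := by
      rw [Finset.range_add_one, Finset.image_insert,
        Finset.erase_insert]
      simp only [Finset.mem_image, Finset.mem_range]
      rintro ⟨j, hj, hje⟩
      exact absurd (hgm.injective hje) (by omega)
    have hrec := D_rec f ((Finset.range (m + 2)).image g) h0 h1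
    rw [hA, hB, ih x, ih (x + h)] at hrec
    have hgd : g (m + 1) - g 0 = (m + 1) * h := by push_cast [hg]; ring
    rw [hgd] at hrec
    have hiter : (dOp h)^[m + 1] f x = (dOp h)^[m] f (x + h) - (dOp h)^[m] f x := by
      rw [Function.iterate_succ_apply']
      rfl
    have hfac : ((m + 1).factorial : ℝ) = (m + 1) * m.factorial := by
      rw [Nat.factorial_succ]; push_cast; ring
    have hfm : (m.factorial : ℝ) ≠ 0 := Nat.cast_ne_zero.2 m.factorial_ne_zero
    have hhne : h ≠ 0 := ne_of_gt hh
    have hm1 : ((m : ℝ) + 1) ≠ 0 := by positivity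
    rw [hiter, hfac]
    rw [pow_succ]
    field_simp at hrec ⊢
    linarith [hrec]

lemma key (n M : ℕ) (f : ℝ → ℝ) (x0 h : ℝ) (hh : 0 < h)
    (hJ : ∀ k : ℕ, k + (n + 1) ≤ M → 0 ≤ (dOp h)^[n + 1] f (x0 + k * h)) :
    ∀ (d : ℕ) (T : Finset ℕ), T.card = n + 2 → (∀ k ∈ T, k ≤ M) →
      ∀ (hne : T.Nonempty), T.max' hne - T.min' hne = d →
      0 ≤ D f (T.image (fun k : ℕ => x0 + k * h)) := by
  have hgm : StrictMono (fun k : ℕ => x0 + k * h) := fun i j hij => by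
    have : (i : ℝ) < j := by exact_mod_cast hij
    simp only
    nlinarith
  set g : ℕ → ℝ := fun k : ℕ => x0 + k * h with hg
  intro d
  induction d using Nat.strong_induction_on with
  | _ d ih =>
    intro T hT hM hne hd
    set a := T.min' hne with hadef
    set b := T.max' hne with hbdef
    have haT : a ∈ T := T.min'_mem hne
    have hbT : b ∈ T := T.max'_mem hne
    have hab : a < b := T.min'_lt_max'_of_card (by omega)
    have hsub : T ⊆ Finset.Icc a b := fun k hk =>
      Finset.mem_Icc.2 ⟨T.min'_le k hk, T.le_max' k hk⟩
    have hcardIcc : (Finset.Icc a b).card = b - a + 1 := by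
      rw [Nat.card_Icc]; omega
    have hba : n + 1 ≤ b - a := by
      have := Finset.card_le_card hsub
      omega
    have hbM : b ≤ M := hM b hbT
    by_cases hcase : b - a = n + 1
    · -- consecutive case
      have hTeq : T = Finset.Icc a b := by
        apply Finset.eq_of_subset_of_card_le hsub
        omega
      have hT2 : T = (Finset.range (n + 2)).image (fun j => a + j) := by
        rw [hTeq]; ext k
        simp only [Finset.mem_Icc, Finset.mem_image, Finset.mem_range]
        constructor
        · intro ⟨h1, h2⟩; exact ⟨k - a, by omega, by omega⟩
        · rintro ⟨j, hj, rfl⟩; omega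
      rw [hT2, Finset.image_image]
      have hfe : (g ∘ fun j => a + j) = fun j : ℕ => (x0 + a * h) + j * h := by
        funext j; simp only [hg, Function.comp]; push_cast; ring
      rw [hfe, D_grid f h hh (n + 1) (x0 + a * h)]
      apply div_nonneg
      · exact hJ a (by omega)
      · positivity
    · -- gap case
      have hba2 : n + 2 ≤ b - a := by omega
      have hgap : ((Finset.Ioo a b) \ T).Nonempty := by
        rw [← Finset.card_pos]
        have h1 : (Finset.Ioo a b) ∩ T ⊆ (T.erase a).erase b := by
          intro k hk
          rw [Finset.mem_inter, Finset.mem_Ioo] at hk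
          exact Finset.mem_erase.2 ⟨by omega, Finset.mem_erase.2 ⟨by omega, hk.2⟩⟩
        have h2 : ((T.erase a).erase b).card = n := by
          rw [Finset.card_erase_of_mem (Finset.mem_erase.2 ⟨by omega, hbT⟩),
            Finset.card_erase_of_mem haT]
          omega
        have h3 := Finset.card_le_card h1
        have h4 := Finset.card_sdiff_add_card_inter (Finset.Ioo a b) T
        rw [Nat.card_Ioo] at h4
        omega
      obtain ⟨j, hj⟩ := hgap
      rw [Finset.mem_sdiff, Finset.mem_Ioo] at hj
      obtain ⟨⟨haj, hjb⟩, hjT⟩ := hj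
      set TB := insert j (T.erase a) with hTB
      set TC := insert j (T.erase b) with hTC
      have hjTa : j ∉ T.erase a := fun hmem => hjT (Finset.mem_of_mem_erase hmem)
      have hjTb : j ∉ T.erase b := fun hmem => hjT (Finset.mem_of_mem_erase hmem)
      have haTb : a ∈ T.erase b := Finset.mem_erase.2 ⟨by omega, haT⟩
      have hbTa : b ∈ T.erase a := Finset.mem_erase.2 ⟨by omega, hbT⟩
      have hcardB : TB.card = n + 2 := by
        rw [hTB, Finset.card_insert_of_notMem hjTa, Finset.card_erase_of_mem haT]; omega
      have hcardC : TC.card = n + 2 := by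
        rw [hTC, Finset.card_insert_of_notMem hjTb, Finset.card_erase_of_mem hbT]; omega
      have hneB : TB.Nonempty := Finset.card_pos.1 (by omega)
      have hneC : TC.Nonempty := Finset.card_pos.1 (by omega)
      have hMB : ∀ k ∈ TB, k ≤ M := by
        intro k hk
        rcases Finset.mem_insert.1 hk with rfl | hk'
        · omega
        · exact hM k (Finset.mem_of_mem_erase hk')
      have hMC : ∀ k ∈ TC, k ≤ M := by
        intro k hk
        rcases Finset.mem_insert.1 hk with rfl | hk'
        · omega
        · exact hM k (Finset.mem_of_mem_erase hk')
      -- measure bounds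
      have hminC : a ≤ TC.min' hneC := by
        rw [Finset.le_min'_iff]
        intro y hy
        rcases Finset.mem_insert.1 hy with rfl | hy'
        · omega
        · exact T.min'_le y (Finset.mem_of_mem_erase hy')
      have hmaxC : TC.max' hneC < b := by
        rw [Finset.max'_lt_iff]
        intro y hy
        rcases Finset.mem_insert.1 hy with rfl | hy'
        · omega
        · have := T.le_max' y (Finset.mem_of_mem_erase hy')
          have hyb := (Finset.mem_erase.1 hy').1
          omega
      have hminC' : TC.min' hneC ≤ TC.max' hneC := TC.min'_le _ (TC.max'_mem hneC)
      have hdC : TC.max' hneC - TC.min' hneC < d := by omega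
      have hminB : a < TB.min' hneB := by
        rw [Finset.lt_min'_iff]
        intro y hy
        rcases Finset.mem_insert.1 hy with rfl | hy'
        · omega
        · have := T.min'_le y (Finset.mem_of_mem_erase hy')
          have hya := (Finset.mem_erase.1 hy').1
          omega
      have hmaxB : TB.max' hneB ≤ b := by
        apply Finset.max'_le
        intro y hy
        rcases Finset.mem_insert.1 hy with rfl | hy'
        · omega
        · exact T.le_max' y (Finset.mem_of_mem_erase hy')
      have hdB : TB.max' hneB - TB.min' hneB < d := by omega
      have ihB := ih _ hdB TB hcardB hMB hneB rfl
      have ihC := ih _ hdC TC hcardC hMC hneC rfl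
      -- identity
      have hinj : Function.Injective g := hgm.injective
      have hgaT : g a ∈ T.image g := Finset.mem_image_of_mem g haT
      have hgbT : g b ∈ T.image g := Finset.mem_image_of_mem g hbT
      have hgjT : g j ∉ T.image g := by
        rw [Finset.mem_image]
        rintro ⟨k, hk, hke⟩
        exact hjT (hinj hke ▸ hk)
      have hgja : g j ≠ g a := fun he => by have := hinj he; omega
      have hgjb : g j ≠ g b := fun he => by have := hinj he; omega
      have hid := D_insert f (T.image g) hgaT hgbT hgjT hgja hgjb
      have heB : insert (g j) ((T.image g).erase (g a)) = TB.image g := by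
        rw [hTB, Finset.image_insert, Finset.image_erase hinj]
      have heC : insert (g j) ((T.image g).erase (g b)) = TC.image g := by
        rw [hTC, Finset.image_insert, Finset.image_erase hinj]
      rw [heB, heC] at hid
      have hlab : g a < g b := hgm hab
      have hlaj : g a < g j := hgm haj
      have hljb : g j < g b := hgm hjb
      nlinarith [mul_nonneg (le_of_lt (sub_pos.2 hlaj)) ihC,
        mul_nonneg (le_of_lt (sub_pos.2 hljb)) ihB]

lemma divDiff_eq_D (m : ℕ) (x : Fin (m + 1) → ℝ) (hx : Function.Injective x) (f : ℝ → ℝ) :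
    divDiff m x f = D f (Finset.image x Finset.univ) := by
  rw [divDiff, D, Finset.sum_image (fun i _ j _ h => hx h)]
  refine Finset.sum_congr rfl fun i _ => ?_
  congr 1
  rw [← Finset.image_erase hx, Finset.prod_image (fun i _ j _ h => hx h)]


/-- An n-Jensen convex function satisfies the n-convexity inequality at rational nodes. -/
theorem jensen_convex_rational_nodes (n : ℕ) (hn : 1 ≤ n) (I : Set ℝ)
    (hI : ProperOpenInterval I) (f : ℝ → ℝ) (hf : JensenConvexOrder n I f) :
    ∀ x : Fin (n + 2) → ℝ, Function.Injective x → (∀ i, x i ∈ I) →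
      (∀ i, IsRatR (x i)) → 0 ≤ divDiff (n + 1) x f := by
  intro x hxinj hxI hxQ
  choose q hq using hxQ
  set d : ℕ := ∏ i, (q i).den with hddef
  have hd0 : 0 < d := Finset.prod_pos (fun i _ => (q i).pos)
  have hz : ∀ i, ∃ z : ℤ, (z : ℚ) = q i * d := by
    intro i
    obtain ⟨c, hc⟩ := Finset.dvd_prod_of_mem (fun i => (q i).den) (Finset.mem_univ i)
    refine ⟨(q i).num * c, ?_⟩
    have hden : ((q i).den : ℚ) ≠ 0 := Nat.cast_ne_zero.2 (q i).den_nz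
    rw [← hddef] at hc
    rw [hc]
    push_cast
    rw [← mul_assoc, Rat.mul_den_eq_num]
  choose z hz using hz
  have hxz : ∀ i, x i = (z i : ℝ) / d := by
    intro i
    have h1 : ((z i : ℚ) : ℝ) = ((q i * d : ℚ) : ℝ) := by rw [hz i]
    push_cast at h1
    rw [hq i] at h1
    have : (d : ℝ) ≠ 0 := Nat.cast_ne_zero.2 (by omega)
    field_simp [h1]
    linarith [h1]
  have hzinj : Function.Injective z := by
    intro i j hij
    apply hxinj
    rw [hxz i, hxz j, hij]
  obtain ⟨i0, -, hi0⟩ := Finset.exists_min_image Finset.univ z (Finset.univ_nonempty)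
  obtain ⟨i1, -, hi1⟩ := Finset.exists_max_image Finset.univ z (Finset.univ_nonempty)
  have hi0' : ∀ i, z i0 ≤ z i := fun i => hi0 i (Finset.mem_univ i)
  have hi1' : ∀ i, z i ≤ z i1 := fun i => hi1 i (Finset.mem_univ i)
  set h : ℝ := 1 / d with hhdef
  have hh : 0 < h := by positivity
  set x0 : ℝ := x i0 with hx0
  set g : ℕ → ℝ := fun k : ℕ => x0 + k * h with hg
  set k : Fin (n + 2) → ℕ := fun i => (z i - z i0).toNat with hk
  have hkz : ∀ i, (k i : ℤ) = z i - z i0 := fun i =>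
    Int.toNat_of_nonneg (sub_nonneg.2 (hi0' i))
  set M : ℕ := (z i1 - z i0).toNat with hM
  have hMz : (M : ℤ) = z i1 - z i0 := Int.toNat_of_nonneg (sub_nonneg.2 (hi0' i1))
  have hkM : ∀ i, k i ≤ M := by
    intro i
    have h1 := hkz i; have h2 := hMz; have h3 := hi1' i
    omega
  have hkinj : Function.Injective k := by
    intro i j hij
    apply hzinj
    have h1 := hkz i; have h2 := hkz j
    omega
  have hgk : ∀ kk : ℕ, g kk = ((z i0 : ℝ) + kk) / d := by
    intro kk
    have hd : (d : ℝ) ≠ 0 := Nat.cast_ne_zero.2 (by omega)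
    rw [hg]; simp only
    rw [hx0, hxz i0, hhdef]
    field_simp
  have hgki : ∀ i, g (k i) = x i := by
    intro i
    rw [hgk, hxz i]
    have : ((k i : ℕ) : ℝ) = (z i : ℝ) - (z i0 : ℝ) := by exact_mod_cast hkz i
    rw [this]; ring_nf
  -- interval containment
  have hIcc : Set.Icc (x i0) (x i1) ⊆ I := hI.2.1.out (hxI i0) (hxI i1)
  have hd : (0:ℝ) < d := Nat.cast_pos.2 hd0
  have hgmono : Monotone g := fun p r hpr => by
    have hc : (p : ℝ) ≤ r := by exact_mod_cast hpr
    simp only [hg]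
    nlinarith
  have hg0 : g 0 = x i0 := by simp [hg, hx0]
  have hgM : g M = x i1 := by
    rw [hgk, hxz i1]
    have hcast : ((M : ℕ) : ℝ) = (z i1 : ℝ) - (z i0 : ℝ) := by exact_mod_cast hMz
    rw [hcast]
    ring_nf
  have hmemg : ∀ kk : ℕ, kk ≤ M → g kk ∈ I := fun kk hkk =>
    hIcc ⟨hg0 ▸ hgmono (Nat.zero_le kk), hgM ▸ hgmono hkk⟩
  -- Jensen hypothesis on the grid
  have hJ : ∀ kk : ℕ, kk + (n + 1) ≤ M → 0 ≤ (dOp h)^[n + 1] f (x0 + kk * h) := by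
    intro kk hkk
    have h1 : g kk ∈ I := hmemg kk (by omega)
    have h2 : g (kk + (n + 1)) ∈ I := hmemg _ hkk
    have h3 : g kk + ((n : ℝ) + 1) * h = g (kk + (n + 1)) := by
      simp only [hg]; push_cast; ring
    exact hf h hh (g kk) h1 (h3 ▸ h2)
  -- apply key lemma
  set T : Finset ℕ := Finset.image k Finset.univ with hT
  have hcardT : T.card = n + 2 := by
    rw [hT, Finset.card_image_of_injective _ hkinj, Finset.card_univ, Fintype.card_fin]
  have hMT : ∀ kk ∈ T, kk ≤ M := by
    intro kk hkk
    obtain ⟨i, -, rfl⟩ := Finset.mem_image.1 hkk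
    exact hkM i
  have hneT : T.Nonempty := Finset.card_pos.1 (by omega)
  have hkey := key n M f x0 h hh hJ (T.max' hneT - T.min' hneT) T hcardT hMT hneT rfl
  have himg : T.image (fun kk : ℕ => x0 + kk * h) = Finset.image x Finset.univ := by
    rw [hT, Finset.image_image]
    exact Finset.image_congr fun i _ => hgki i
  rw [divDiff_eq_D (n + 1) x hxinj f, ← himg]
  exact hkey
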